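/- Hypergradient formula: under the assumptions below, the composite objective F(θ) = g(x*(θ), θ) is differentiable with ∇F(θ) = ∇_θ g(x*(θ), θ) − (∇²_{xθ} f(x*(θ), θ))ᵀ (∇²_{xx} f(x*(θ), θ))⁻¹ ∇_x g(x*(θ), θ). -/

import Mathlib

local notation "⟪" x ", " y "⟫" => @inner ℝ _ _ x y

private lemma aux_deriv_lower {φ : ℝ → ℝ} {d c : ℝ} (hd : HasDerivAt φ d 0)
    (h : ∀ t : ℝ, 0 < t → c * t ≤ φ t - φ 0) : c ≤ d := by
  have hs : Filter.Tendsto (slope φ 0) (nhdsWithin 0 (Set.Ioi 0)) (nhds d) :=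
    (hasDerivAt_iff_tendsto_slope.1 hd).mono_left
      (nhdsWithin_mono 0 (fun t ht => ne_of_gt ht))
  refine ge_of_tendsto hs ?_
  filter_upwards [self_mem_nhdsWithin] with t ht
  have ht : (0:ℝ) < t := ht
  rw [slope_def_field, sub_zero, le_div_iff₀ ht]
  exact h t ht

private lemma aux_convex_fo {E : Type*} [NormedAddCommGroup E] [NormedSpace ℝ E] {h : E → ℝ}
    (hc : ConvexOn ℝ Set.univ h) {x y : E} {D : E →L[ℝ] ℝ} (hd : HasFDerivAt h D x) :
    h x + D (y - x) ≤ h y := by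
  have hq : ConvexOn ℝ Set.univ (h ∘ (AffineMap.lineMap x y : ℝ →ᵃ[ℝ] E)) := by
    have := hc.comp_affineMap (AffineMap.lineMap x y : ℝ →ᵃ[ℝ] E)
    simpa using this
  have hline : HasDerivAt (h ∘ (AffineMap.lineMap x y : ℝ →ᵃ[ℝ] E)) (D (y - x)) 0 := by
    have h1 : HasDerivAt (fun t : ℝ => t • (y - x) + x) (y - x) 0 := by
      simpa using ((hasDerivAt_id (0:ℝ)).smul_const (y - x)).add_const x
    have heq : (fun t : ℝ => (AffineMap.lineMap x y : ℝ →ᵃ[ℝ] E) t) = fun t : ℝ => t • (y - x) + x := by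
      funext t
      simp only [AffineMap.lineMap_apply_module]
      module
    have h2 : HasDerivAt (fun t : ℝ => (AffineMap.lineMap x y : ℝ →ᵃ[ℝ] E) t) (y - x) 0 := by
      rw [heq]; exact h1
    have hd' : HasFDerivAt h D ((AffineMap.lineMap x y : ℝ →ᵃ[ℝ] E) 0) := by
      rwa [AffineMap.lineMap_apply_zero]
    exact hd'.comp_hasDerivAt (0:ℝ) h2
  have := hq.le_slope_of_hasDerivAt (Set.mem_univ 0) (Set.mem_univ 1) zero_lt_one hline
  rw [slope_def_field] at this
  simp only [Function.comp, AffineMap.lineMap_apply_zero, AffineMap.lineMap_apply_one] at this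
  simp only [sub_zero, div_one] at this
  linarith

private lemma aux_clm_sum {n : ℕ} (ℓ : EuclideanSpace ℝ (Fin n) →L[ℝ] ℝ)
    (v : EuclideanSpace ℝ (Fin n)) :
    ℓ v = ∑ i, v i * ℓ (EuclideanSpace.single i 1) := by
  have hv : v = ∑ i, v i • EuclideanSpace.single i (1:ℝ) := by
    have := (EuclideanSpace.basisFun (Fin n) ℝ).sum_repr v
    simp only [EuclideanSpace.basisFun_repr, EuclideanSpace.basisFun_apply] at this
    exact this.symm
  conv_lhs => rw [hv]
  rw [map_sum]
  simp [smul_eq_mul]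

set_option maxHeartbeats 2000000 in
private lemma key_deriv {n m : ℕ}
    (f : EuclideanSpace ℝ (Fin n) → EuclideanSpace ℝ (Fin m) → ℝ) (μ : ℝ) (hμ : 0 < μ)
    (hf : ContDiff ℝ 2 (fun p : EuclideanSpace ℝ (Fin n) × EuclideanSpace ℝ (Fin m) => f p.1 p.2))
    (hsc : ∀ θ, StrongConvexOn Set.univ μ (fun x => f x θ))
    (xstar : EuclideanSpace ℝ (Fin m) → EuclideanSpace ℝ (Fin n))
    (hmin : ∀ θ x, f (xstar θ) θ ≤ f x θ)
    (huniq : ∀ θ x, (∀ y, f x θ ≤ f y θ) → x = xstar θ)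
    (θ : EuclideanSpace ℝ (Fin m)) :
    ∃ D : EuclideanSpace ℝ (Fin m) →L[ℝ] EuclideanSpace ℝ (Fin n), HasFDerivAt xstar D θ ∧
      (Matrix.det (fun i k => fderiv ℝ (fun x => fderiv ℝ (fun x' => f x' θ) x
          (EuclideanSpace.single k 1)) (xstar θ) (EuclideanSpace.single i 1)) ≠ 0) ∧
      ∀ (j : Fin m) (k : Fin n),
        (∑ i, D (EuclideanSpace.single j 1) i *
          fderiv ℝ (fun x => fderiv ℝ (fun x' => f x' θ) x (EuclideanSpace.single k 1))
            (xstar θ) (EuclideanSpace.single i 1))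
        = - fderiv ℝ (fun t => fderiv ℝ (fun x' => f x' t) (xstar θ)
            (EuclideanSpace.single k 1)) θ (EuclideanSpace.single j 1) := by
  have hfd : Differentiable ℝ
      (fun p : EuclideanSpace ℝ (Fin n) × EuclideanSpace ℝ (Fin m) => f p.1 p.2) :=
    (hf.of_le one_le_two).differentiable one_ne_zero
  -- partial derivative in x, as a function of the pair
  set D1 : EuclideanSpace ℝ (Fin n) × EuclideanSpace ℝ (Fin m) →
      (EuclideanSpace ℝ (Fin n) →L[ℝ] ℝ) := fun p =>
    (fderiv ℝ (fun p : EuclideanSpace ℝ (Fin n) × EuclideanSpace ℝ (Fin m) => f p.1 p.2) p).comp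
      (ContinuousLinearMap.inl ℝ (EuclideanSpace ℝ (Fin n)) (EuclideanSpace ℝ (Fin m)))
    with hD1def
  have hD1cd : ContDiff ℝ 1 D1 := by
    have h1 : ContDiff ℝ 1 (fderiv ℝ
        (fun p : EuclideanSpace ℝ (Fin n) × EuclideanSpace ℝ (Fin m) => f p.1 p.2)) :=
      hf.fderiv_right (by norm_num)
    exact (((ContinuousLinearMap.compL ℝ (EuclideanSpace ℝ (Fin n))
      (EuclideanSpace ℝ (Fin n) × EuclideanSpace ℝ (Fin m)) ℝ).flip
      (ContinuousLinearMap.inl ℝ (EuclideanSpace ℝ (Fin n)) (EuclideanSpace ℝ (Fin m)))).contDiff).comp h1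
  have hslice : ∀ (x : EuclideanSpace ℝ (Fin n)) (θ' : EuclideanSpace ℝ (Fin m)),
      HasFDerivAt (fun x' => f x' θ') (D1 (x, θ')) x := by
    intro x θ'
    exact (hfd (x, θ')).hasFDerivAt.comp x (hasFDerivAt_prodMk_left (𝕜 := ℝ) x θ')
  have hD1slice : ∀ (x : EuclideanSpace ℝ (Fin n)) (θ' : EuclideanSpace ℝ (Fin m)),
      fderiv ℝ (fun x' => f x' θ') x = D1 (x, θ') := fun x θ' => (hslice x θ').fderiv
  -- the gradient map
  set Φ : EuclideanSpace ℝ (Fin n) × EuclideanSpace ℝ (Fin m) → EuclideanSpace ℝ (Fin n) :=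
    fun p => (InnerProductSpace.toDual ℝ (EuclideanSpace ℝ (Fin n))).symm (D1 p) with hΦdef
  have hΦcd : ContDiff ℝ 1 Φ :=
    ((InnerProductSpace.toDual ℝ (EuclideanSpace ℝ (Fin n))).symm.contDiff).comp hD1cd
  have hΦinner : ∀ p v, ⟪Φ p, v⟫ = D1 p v := fun p v => InnerProductSpace.toDual_symm_apply
  have hΦdiff : ∀ p, HasFDerivAt Φ (fderiv ℝ Φ p) p :=
    fun p => (hΦcd.differentiable one_ne_zero p).hasFDerivAt
  set A := fderiv ℝ Φ (xstar θ, θ) with hAdef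
  have hAder : ∀ v : EuclideanSpace ℝ (Fin n), HasFDerivAt (fun p => D1 p v)
      ((innerSL ℝ v).comp A) (xstar θ, θ) := by
    intro v
    have h1 : HasFDerivAt (fun p => (innerSL ℝ v) (Φ p)) ((innerSL ℝ v).comp A) (xstar θ, θ) :=
      ((innerSL ℝ v).hasFDerivAt).comp _ (hΦdiff _)
    refine h1.congr_of_eventuallyEq (Filter.Eventually.of_forall fun p => ?_)
    show D1 p v = ⟪v, Φ p⟫
    rw [real_inner_comm]
    exact (hΦinner p v).symm
  -- matrix entry identities
  have hHxx_eq : ∀ (i k : Fin n),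
      fderiv ℝ (fun x => fderiv ℝ (fun x' => f x' θ) x (EuclideanSpace.single k 1)) (xstar θ)
        (EuclideanSpace.single i 1)
      = ⟪EuclideanSpace.single k 1, A (EuclideanSpace.single i 1, 0)⟫ := by
    intro i k
    have hcomp : HasFDerivAt (fun x : EuclideanSpace ℝ (Fin n) => D1 (x, θ) (EuclideanSpace.single k 1))
        (((innerSL ℝ (EuclideanSpace.single k 1)).comp A).comp
          (ContinuousLinearMap.inl ℝ (EuclideanSpace ℝ (Fin n)) (EuclideanSpace ℝ (Fin m)))) (xstar θ) :=
      by have h := (hAder (EuclideanSpace.single k 1)).comp (xstar θ) (hasFDerivAt_prodMk_left (𝕜 := ℝ) (xstar θ) θ); exact h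
    have heq : (fun x : EuclideanSpace ℝ (Fin n) =>
        fderiv ℝ (fun x' => f x' θ) x (EuclideanSpace.single k 1))
        = fun x => D1 (x, θ) (EuclideanSpace.single k 1) := by
      funext x; rw [hD1slice]
    rw [heq, hcomp.fderiv]
    simp
  have hHxθ_eq : ∀ (k : Fin n) (j : Fin m),
      fderiv ℝ (fun t => fderiv ℝ (fun x' => f x' t) (xstar θ) (EuclideanSpace.single k 1)) θ
        (EuclideanSpace.single j 1)
      = ⟪EuclideanSpace.single k 1, A (0, EuclideanSpace.single j 1)⟫ := by
    intro k j
    have hcomp : HasFDerivAt (fun t : EuclideanSpace ℝ (Fin m) => D1 (xstar θ, t) (EuclideanSpace.single k 1))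
        (((innerSL ℝ (EuclideanSpace.single k 1)).comp A).comp
          (ContinuousLinearMap.inr ℝ (EuclideanSpace ℝ (Fin n)) (EuclideanSpace ℝ (Fin m)))) θ :=
      (hAder (EuclideanSpace.single k 1)).comp θ (hasFDerivAt_prodMk_right (xstar θ) θ)
    have heq : (fun t : EuclideanSpace ℝ (Fin m) =>
        fderiv ℝ (fun x' => f x' t) (xstar θ) (EuclideanSpace.single k 1))
        = fun t => D1 (xstar θ, t) (EuclideanSpace.single k 1) := by
      funext t; rw [hD1slice]
    rw [heq, hcomp.fderiv]
    simp
  -- strong monotonicity of the partial gradient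
  have hconv2 : ∀ θ' : EuclideanSpace ℝ (Fin m),
      ConvexOn ℝ Set.univ (fun x => f x θ' - μ / 2 * ‖x‖ ^ 2) :=
    fun θ' => strongConvexOn_iff_convex.mp (hsc θ')
  have hmono : ∀ (θ' : EuclideanSpace ℝ (Fin m)) (x y : EuclideanSpace ℝ (Fin n)),
      μ * ‖y - x‖ ^ 2 ≤ D1 (y, θ') (y - x) - D1 (x, θ') (y - x) := by
    intro θ' x y
    have hdx : ∀ z : EuclideanSpace ℝ (Fin n),
        HasFDerivAt (fun x => f x θ' - μ / 2 * ‖x‖ ^ 2)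
          (D1 (z, θ') - (μ / 2) • (2 • (innerSL ℝ z))) z := by
      intro z
      exact (hslice z θ').sub (((hasStrictFDerivAt_norm_sq z).hasFDerivAt).const_smul (μ / 2))
    have h1 := aux_convex_fo (hconv2 θ') (hdx x) (y := y)
    have h2 := aux_convex_fo (hconv2 θ') (hdx y) (y := x)
    simp only [ContinuousLinearMap.sub_apply, ContinuousLinearMap.smul_apply, smul_eq_mul,
      ContinuousLinearMap.smul_apply, innerSL_apply_apply] at h1 h2
    have e1 : (x : EuclideanSpace ℝ (Fin n)) - y = -(y - x) := by abel
    have e2 : D1 (y, θ') (x - y) = - D1 (y, θ') (y - x) := by rw [e1, map_neg]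
    have e3 : ⟪y, x - y⟫ = - ⟪y, y - x⟫ := by rw [e1, inner_neg_right]
    have e4 : ⟪y, y - x⟫ - ⟪x, y - x⟫ = ‖y - x‖ ^ 2 := by
      rw [← inner_sub_left, real_inner_self_eq_norm_sq]
    rw [e2, e3] at h2
    simp only [nsmul_eq_mul, Nat.cast_ofNat] at h1 h2
    nlinarith [h1, h2, e4]
  -- coercivity of A in the x-direction
  have hcoer : ∀ v : EuclideanSpace ℝ (Fin n), μ * ‖v‖ ^ 2 ≤ ⟪v, A (v, 0)⟫ := by
    intro v
    have hder : HasDerivAt (fun t : ℝ => D1 (xstar θ + t • v, θ) v) (⟪v, A (v, 0)⟫) 0 := by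
      have hc : HasDerivAt (fun t : ℝ => ((xstar θ + t • v, θ) :
          EuclideanSpace ℝ (Fin n) × EuclideanSpace ℝ (Fin m))) (v, (0 : EuclideanSpace ℝ (Fin m))) 0 := by
        have h1 : HasDerivAt (fun t : ℝ => xstar θ + t • v) v 0 := by
          simpa using ((hasDerivAt_id (0:ℝ)).smul_const v).const_add (xstar θ)
        exact h1.prodMk (hasDerivAt_const 0 θ)
      have h0 : ((xstar θ + (0:ℝ) • v, θ) : EuclideanSpace ℝ (Fin n) × EuclideanSpace ℝ (Fin m))
          = (xstar θ, θ) := by simp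
      have h2 : HasFDerivAt (fun p => D1 p v) ((innerSL ℝ v).comp A)
          ((xstar θ + (0:ℝ) • v, θ) : EuclideanSpace ℝ (Fin n) × EuclideanSpace ℝ (Fin m)) := by
        rw [h0]; exact hAder v
      have h3 := h2.comp_hasDerivAt (0:ℝ) hc
      exact h3
    refine aux_deriv_lower hder ?_
    intro t ht
    have h := hmono θ (xstar θ) (xstar θ + t • v)
    have hyx : (xstar θ + t • v) - xstar θ = t • v := by abel
    rw [hyx] at h
    have hn : ‖t • v‖ ^ 2 = t ^ 2 * ‖v‖ ^ 2 := by
      rw [norm_smul]; simp [mul_pow, Real.norm_eq_abs, sq_abs]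
    rw [hn] at h
    have hsm : ∀ z : EuclideanSpace ℝ (Fin n) × EuclideanSpace ℝ (Fin m),
        D1 z (t • v) = t * D1 z v := fun z => by rw [map_smul]; simp
    rw [hsm, hsm] at h
    have h0v : (0:ℝ) • v = 0 := zero_smul ℝ v
    have hφ0 : D1 (xstar θ + (0:ℝ) • v, θ) v = D1 (xstar θ, θ) v := by rw [h0v, add_zero]
    rw [hφ0]
    nlinarith [h, ht]
  -- first-order condition at the minimizer, and its converse
  have hcrit : ∀ θ' : EuclideanSpace ℝ (Fin m), Φ (xstar θ', θ') = 0 := by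
    intro θ'
    have hloc : IsLocalMin (fun x' => f x' θ') (xstar θ') :=
      Filter.Eventually.of_forall (fun x => hmin θ' x)
    have h0 : fderiv ℝ (fun x' => f x' θ') (xstar θ') = 0 := hloc.fderiv_eq_zero
    have hD10 : D1 (xstar θ', θ') = 0 := by rw [← hD1slice, h0]
    rw [hΦdef]
    simp only [hD10, map_zero]
  have hglobal : ∀ (θ' : EuclideanSpace ℝ (Fin m)) (x : EuclideanSpace ℝ (Fin n)),
      Φ (x, θ') = 0 → x = xstar θ' := by
    intro θ' x hx
    refine huniq θ' x (fun y => ?_)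
    have hco : ConvexOn ℝ Set.univ (fun x => f x θ') :=
      (hsc θ').convexOn (fun r => by positivity)
    have h1 := aux_convex_fo hco (hslice x θ') (y := y)
    have hz : D1 (x, θ') (y - x) = 0 := by
      rw [← hΦinner, hx, inner_zero_left]
    rw [hz] at h1
    linarith
  -- the extended map Ψ and its invertible derivative
  set Bc : (EuclideanSpace ℝ (Fin n) × EuclideanSpace ℝ (Fin m)) →L[ℝ]
      (EuclideanSpace ℝ (Fin n) × EuclideanSpace ℝ (Fin m)) :=
    A.prod (ContinuousLinearMap.snd ℝ (EuclideanSpace ℝ (Fin n)) (EuclideanSpace ℝ (Fin m)))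
    with hBcdef
  have hBc_apply : ∀ q, Bc q = (A q, q.2) := fun q => rfl
  have hΨstrict : HasStrictFDerivAt
      (fun p : EuclideanSpace ℝ (Fin n) × EuclideanSpace ℝ (Fin m) => (Φ p, p.2)) Bc
      (xstar θ, θ) := by
    have hcd : ContDiffAt ℝ 1
        (fun p : EuclideanSpace ℝ (Fin n) × EuclideanSpace ℝ (Fin m) => (Φ p, p.2))
        (xstar θ, θ) := (hΦcd.prodMk contDiff_snd).contDiffAt
    have hstr := hcd.hasStrictFDerivAt one_ne_zero
    have hfd2 : HasFDerivAt
        (fun p : EuclideanSpace ℝ (Fin n) × EuclideanSpace ℝ (Fin m) => (Φ p, p.2)) Bc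
        (xstar θ, θ) := (hΦdiff _).prodMk (hasFDerivAt_snd)
    rwa [hfd2.fderiv] at hstr
  have hker0 : ∀ q : EuclideanSpace ℝ (Fin n) × EuclideanSpace ℝ (Fin m),
      Bc q = 0 → q = 0 := by
    intro q hq
    have h2 : q.2 = 0 := by
      have := congrArg Prod.snd hq; simpa [hBc_apply] using this
    have h1 : A q = 0 := by
      have := congrArg Prod.fst hq; simpa [hBc_apply] using this
    have hq1 : q = (q.1, (0 : EuclideanSpace ℝ (Fin m))) := by
      rw [← h2]
    have hA1 : A (q.1, (0 : EuclideanSpace ℝ (Fin m))) = 0 := by rw [← hq1]; exact h1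
    have hc := hcoer q.1
    rw [hA1, inner_zero_right] at hc
    have hq10 : q.1 = 0 := by
      by_contra hne
      have hpos : 0 < ‖q.1‖ := norm_pos_iff.mpr hne
      nlinarith [mul_pos hμ (pow_pos hpos 2)]
    rw [hq1, hq10]
    rfl
  have hinj : Function.Injective Bc := by
    intro a b hab
    have : Bc (a - b) = 0 := by rw [map_sub, hab, sub_self]
    have := hker0 _ this
    have := sub_eq_zero.mp this
    exact this
  have hsurj : Function.Surjective Bc := by
    have := (LinearMap.injective_iff_surjective
      (f := (Bc : (EuclideanSpace ℝ (Fin n) × EuclideanSpace ℝ (Fin m)) →ₗ[ℝ]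
        (EuclideanSpace ℝ (Fin n) × EuclideanSpace ℝ (Fin m))))).mp hinj
    exact this
  set Beq : (EuclideanSpace ℝ (Fin n) × EuclideanSpace ℝ (Fin m)) ≃L[ℝ]
      (EuclideanSpace ℝ (Fin n) × EuclideanSpace ℝ (Fin m)) :=
    (LinearEquiv.ofBijective (Bc : (EuclideanSpace ℝ (Fin n) × EuclideanSpace ℝ (Fin m)) →ₗ[ℝ]
      (EuclideanSpace ℝ (Fin n) × EuclideanSpace ℝ (Fin m)))
      ⟨hinj, hsurj⟩).toContinuousLinearEquiv with hBeqdef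
  have hcoeB : (Beq : (EuclideanSpace ℝ (Fin n) × EuclideanSpace ℝ (Fin m)) →L[ℝ]
      (EuclideanSpace ℝ (Fin n) × EuclideanSpace ℝ (Fin m))) = Bc := by
    apply ContinuousLinearMap.ext
    intro q
    rfl
  have hΨeq : HasStrictFDerivAt
      (fun p : EuclideanSpace ℝ (Fin n) × EuclideanSpace ℝ (Fin m) => (Φ p, p.2))
      (Beq : (EuclideanSpace ℝ (Fin n) × EuclideanSpace ℝ (Fin m)) →L[ℝ]
      (EuclideanSpace ℝ (Fin n) × EuclideanSpace ℝ (Fin m))) (xstar θ, θ) := by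
    rw [hcoeB]; exact hΨstrict
  -- local inverse
  set Ψ : EuclideanSpace ℝ (Fin n) × EuclideanSpace ℝ (Fin m) →
      EuclideanSpace ℝ (Fin n) × EuclideanSpace ℝ (Fin m) := fun p => (Φ p, p.2) with hΨdef
  set ι := hΨeq.localInverse Ψ _ _ with hιdef
  have hΨp₀ : Ψ (xstar θ, θ) = ((0 : EuclideanSpace ℝ (Fin n)), θ) := by
    rw [hΨdef]
    simp only [hcrit θ]
  have hri := hΨeq.eventually_right_inverse
  have htend : Filter.Tendsto (fun t : EuclideanSpace ℝ (Fin m) =>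
      (((0 : EuclideanSpace ℝ (Fin n)), t) :
        EuclideanSpace ℝ (Fin n) × EuclideanSpace ℝ (Fin m))) (nhds θ) (nhds (Ψ (xstar θ, θ))) := by
    rw [hΨp₀]
    exact (continuous_const.prodMk continuous_id).continuousAt
  have hri' : ∀ᶠ t in nhds θ, Ψ (ι ((0 : EuclideanSpace ℝ (Fin n)), t))
      = ((0 : EuclideanSpace ℝ (Fin n)), t) := htend.eventually hri
  have hxeq : ∀ᶠ t in nhds θ, (ι ((0 : EuclideanSpace ℝ (Fin n)), t)).1 = xstar t := by
    filter_upwards [hri'] with t ht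
    have h2 : (ι ((0 : EuclideanSpace ℝ (Fin n)), t)).2 = t := by
      have := congrArg Prod.snd ht
      simpa [hΨdef] using this
    have h1 : Φ (ι ((0 : EuclideanSpace ℝ (Fin n)), t)) = 0 := by
      have := congrArg Prod.fst ht
      simpa [hΨdef] using this
    have hpair : (((ι ((0 : EuclideanSpace ℝ (Fin n)), t)).1, t) :
        EuclideanSpace ℝ (Fin n) × EuclideanSpace ℝ (Fin m))
        = ι ((0 : EuclideanSpace ℝ (Fin n)), t) := by
      exact Prod.ext rfl h2.symm
    refine hglobal t _ ?_
    rw [hpair]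
    exact h1
  -- derivative of the implicit function
  have hinv : HasStrictFDerivAt ι
      ((Beq.symm : (EuclideanSpace ℝ (Fin n) × EuclideanSpace ℝ (Fin m)) →L[ℝ]
        (EuclideanSpace ℝ (Fin n) × EuclideanSpace ℝ (Fin m))))
      (((0 : EuclideanSpace ℝ (Fin n)), θ)) := by
    have := hΨeq.to_localInverse
    rwa [hΨp₀] at this
  have hj0d : HasFDerivAt (fun t : EuclideanSpace ℝ (Fin m) =>
      (((0 : EuclideanSpace ℝ (Fin n)), t) :
        EuclideanSpace ℝ (Fin n) × EuclideanSpace ℝ (Fin m)))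
      (ContinuousLinearMap.inr ℝ (EuclideanSpace ℝ (Fin n)) (EuclideanSpace ℝ (Fin m))) θ :=
    hasFDerivAt_prodMk_right 0 θ
  set D : EuclideanSpace ℝ (Fin m) →L[ℝ] EuclideanSpace ℝ (Fin n) :=
    (ContinuousLinearMap.fst ℝ (EuclideanSpace ℝ (Fin n)) (EuclideanSpace ℝ (Fin m))).comp
      (((Beq.symm : (EuclideanSpace ℝ (Fin n) × EuclideanSpace ℝ (Fin m)) →L[ℝ]
        (EuclideanSpace ℝ (Fin n) × EuclideanSpace ℝ (Fin m)))).comp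
        (ContinuousLinearMap.inr ℝ (EuclideanSpace ℝ (Fin n)) (EuclideanSpace ℝ (Fin m))))
    with hDdef
  have hζ : HasFDerivAt (fun t => (ι ((0 : EuclideanSpace ℝ (Fin n)), t)).1) D θ := by
    have h1 : HasFDerivAt (fun t => ι ((0 : EuclideanSpace ℝ (Fin n)), t))
        ((((Beq.symm : (EuclideanSpace ℝ (Fin n) × EuclideanSpace ℝ (Fin m)) →L[ℝ]
        (EuclideanSpace ℝ (Fin n) × EuclideanSpace ℝ (Fin m))))).comp
        (ContinuousLinearMap.inr ℝ (EuclideanSpace ℝ (Fin n)) (EuclideanSpace ℝ (Fin m)))) θ :=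
      (hinv.hasFDerivAt).comp θ hj0d
    exact ((ContinuousLinearMap.fst ℝ (EuclideanSpace ℝ (Fin n))
      (EuclideanSpace ℝ (Fin m))).hasFDerivAt).comp θ h1
  have hxd : HasFDerivAt xstar D θ := by
    refine hζ.congr_of_eventuallyEq ?_
    filter_upwards [hxeq] with t ht
    exact ht.symm
  -- the kernel relation
  have hkernel : ∀ w : EuclideanSpace ℝ (Fin m), A (D w, w) = 0 := by
    intro w
    set q := Beq.symm (((0 : EuclideanSpace ℝ (Fin n)), w) :
      EuclideanSpace ℝ (Fin n) × EuclideanSpace ℝ (Fin m)) with hqdef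
    have h1 : Bc q = ((0 : EuclideanSpace ℝ (Fin n)), w) := by
      have := Beq.apply_symm_apply (((0 : EuclideanSpace ℝ (Fin n)), w) :
        EuclideanSpace ℝ (Fin n) × EuclideanSpace ℝ (Fin m))
      rw [← this, ← hcoeB]
      rfl
    have hq2 : q.2 = w := by
      have := congrArg Prod.snd h1
      simpa [hBc_apply] using this
    have hAq : A q = 0 := by
      have := congrArg Prod.fst h1
      simpa [hBc_apply] using this
    have hDw : D w = q.1 := rfl
    have : ((D w, w) : EuclideanSpace ℝ (Fin n) × EuclideanSpace ℝ (Fin m)) = q := by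
      rw [hDw, ← hq2]
    rw [this]
    exact hAq
  -- expansion of A in coordinates
  have hAexp : ∀ (v : EuclideanSpace ℝ (Fin n)) (k : Fin n),
      ⟪EuclideanSpace.single k 1, A (v, 0)⟫
      = ∑ i, v i * ⟪EuclideanSpace.single k 1, A (EuclideanSpace.single i 1, 0)⟫ := by
    intro v k
    have hv : ((v, (0 : EuclideanSpace ℝ (Fin m))) :
        EuclideanSpace ℝ (Fin n) × EuclideanSpace ℝ (Fin m))
        = ∑ i, v i • ((EuclideanSpace.single i (1:ℝ), (0 : EuclideanSpace ℝ (Fin m))) :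
          EuclideanSpace ℝ (Fin n) × EuclideanSpace ℝ (Fin m)) := by
      refine Prod.ext ?_ ?_
      · rw [Prod.fst_sum]
        simp only [Prod.smul_mk]
        have := (EuclideanSpace.basisFun (Fin n) ℝ).sum_repr v
        simp only [EuclideanSpace.basisFun_repr, EuclideanSpace.basisFun_apply] at this
        exact this.symm
      · rw [Prod.snd_sum]
        simp
    rw [hv, map_sum, inner_sum]
    congr 1
    funext i
    rw [map_smul]
    simp [real_inner_smul_right]
  refine ⟨D, hxd, ?_, ?_⟩
  · -- determinant is nonzero
    intro h0
    obtain ⟨v, hv0, hvM⟩ := Matrix.exists_vecMul_eq_zero_iff.mpr h0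
    set ve : EuclideanSpace ℝ (Fin n) := (EuclideanSpace.equiv (Fin n) ℝ).symm v with hvedef
    have hvei : ∀ i, ve i = v i := fun i => rfl
    have hAv0 : A (ve, 0) = 0 := by
      ext k
      have hco : (A (ve, (0 : EuclideanSpace ℝ (Fin m)))) k
          = ⟪EuclideanSpace.single k 1, A (ve, 0)⟫ := by
        rw [EuclideanSpace.inner_single_left]
        simp
      rw [hco, hAexp]
      have := congrFun hvM k
      simp only [Matrix.vecMul, dotProduct, Pi.zero_apply] at this
      show _ = (0:ℝ)
      rw [← this]
      congr 1
      funext i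
      rw [hvei, hHxx_eq]
    have hc := hcoer ve
    rw [hAv0, inner_zero_right] at hc
    have hve0 : ve = 0 := by
      by_contra hne
      have hpos : 0 < ‖ve‖ := norm_pos_iff.mpr hne
      nlinarith [mul_pos hμ (pow_pos hpos 2)]
    apply hv0
    have : v = (EuclideanSpace.equiv (Fin n) ℝ) ve := rfl
    rw [this, hve0, map_zero]
  · -- the linear relation
    intro j k
    have hsum : (∑ i, D (EuclideanSpace.single j 1) i *
        fderiv ℝ (fun x => fderiv ℝ (fun x' => f x' θ) x (EuclideanSpace.single k 1))
          (xstar θ) (EuclideanSpace.single i 1))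
        = ⟪EuclideanSpace.single k 1, A (D (EuclideanSpace.single j 1), 0)⟫ := by
      rw [hAexp]
      congr 1
      funext i
      rw [hHxx_eq]
    rw [hsum]
    have hker := hkernel (EuclideanSpace.single j 1)
    have hsplit : ((D (EuclideanSpace.single j 1), EuclideanSpace.single j 1) :
        EuclideanSpace ℝ (Fin n) × EuclideanSpace ℝ (Fin m))
        = (D (EuclideanSpace.single j 1), (0 : EuclideanSpace ℝ (Fin m)))
          + ((0 : EuclideanSpace ℝ (Fin n)), EuclideanSpace.single j 1) := by
      simp
    rw [hsplit, map_add] at hker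
    have hA0 : A (D (EuclideanSpace.single j 1), (0 : EuclideanSpace ℝ (Fin m)))
        = - A ((0 : EuclideanSpace ℝ (Fin n)), EuclideanSpace.single j 1) :=
      eq_neg_of_add_eq_zero_left hker
    rw [hA0, inner_neg_right, hHxθ_eq]
set_option maxHeartbeats 1000000 in
/-- Hypergradient formula: with `x* θ` the unique minimizer of the `μ`-strongly convex
`C²` inner objective `f (·, θ)` and `g` a `C¹` outer objective, the composite
`F θ = g (x* θ) θ` is differentiable with
`∇F(θ) = ∇_θ g − (∇²ₓθ f)ᵀ (∇²ₓₓ f)⁻¹ ∇ₓ g` evaluated at `(x* θ, θ)`. -/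
theorem hypergradient_formula {n m : ℕ}
    (f : EuclideanSpace ℝ (Fin n) → EuclideanSpace ℝ (Fin m) → ℝ)
    (g : EuclideanSpace ℝ (Fin n) → EuclideanSpace ℝ (Fin m) → ℝ) (μ : ℝ) (hμ : 0 < μ)
    (hf : ContDiff ℝ 2 (fun p : EuclideanSpace ℝ (Fin n) × EuclideanSpace ℝ (Fin m) => f p.1 p.2))
    (hg : ContDiff ℝ 1 (fun p : EuclideanSpace ℝ (Fin n) × EuclideanSpace ℝ (Fin m) => g p.1 p.2))
    (hsc : ∀ θ, StrongConvexOn Set.univ μ (fun x => f x θ))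
    (xstar : EuclideanSpace ℝ (Fin m) → EuclideanSpace ℝ (Fin n))
    (hmin : ∀ θ x, f (xstar θ) θ ≤ f x θ)
    (huniq : ∀ θ x, (∀ y, f x θ ≤ f y θ) → x = xstar θ)
    (Hxx : EuclideanSpace ℝ (Fin m) → Matrix (Fin n) (Fin n) ℝ)
    (hHxx : ∀ θ i j, Hxx θ i j =
      fderiv ℝ (fun x => fderiv ℝ (fun x' => f x' θ) x (EuclideanSpace.single j 1))
        (xstar θ) (EuclideanSpace.single i 1))
    (Hxθ : EuclideanSpace ℝ (Fin m) → Matrix (Fin n) (Fin m) ℝ)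
    (hHxθ : ∀ θ i j, Hxθ θ i j =
      fderiv ℝ (fun t => fderiv ℝ (fun x' => f x' t) (xstar θ) (EuclideanSpace.single i 1))
        θ (EuclideanSpace.single j 1))
    (gradxg : EuclideanSpace ℝ (Fin m) → Fin n → ℝ)
    (hgradxg : ∀ θ i, gradxg θ i =
      fderiv ℝ (fun x => g x θ) (xstar θ) (EuclideanSpace.single i 1))
    (gradθg : EuclideanSpace ℝ (Fin m) → Fin m → ℝ)
    (hgradθg : ∀ θ j, gradθg θ j =
      fderiv ℝ (fun t => g (xstar θ) t) θ (EuclideanSpace.single j 1))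
    (F : EuclideanSpace ℝ (Fin m) → ℝ) (hF : ∀ θ, F θ = g (xstar θ) θ) :
    Differentiable ℝ F ∧
      ∀ θ j, fderiv ℝ F θ (EuclideanSpace.single j 1) =
        gradθg θ j - (Matrix.mulVec (Matrix.transpose (Hxθ θ)) (Matrix.mulVec (Hxx θ)⁻¹ (gradxg θ))) j := by
  have main : ∀ θ : EuclideanSpace ℝ (Fin m),
      ∃ L : EuclideanSpace ℝ (Fin m) →L[ℝ] ℝ, HasFDerivAt F L θ ∧
        ∀ j, L (EuclideanSpace.single j 1) =
          gradθg θ j - (Matrix.mulVec (Matrix.transpose (Hxθ θ))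
            (Matrix.mulVec (Hxx θ)⁻¹ (gradxg θ))) j := by
    intro θ
    obtain ⟨D, hxd, hdet, hrel⟩ := key_deriv f μ hμ hf hsc xstar hmin huniq θ
    have hgd : Differentiable ℝ
        (fun p : EuclideanSpace ℝ (Fin n) × EuclideanSpace ℝ (Fin m) => g p.1 p.2) :=
      hg.differentiable one_ne_zero
    set G' := fderiv ℝ
      (fun p : EuclideanSpace ℝ (Fin n) × EuclideanSpace ℝ (Fin m) => g p.1 p.2) (xstar θ, θ)
      with hG'def
    have h1 : HasFDerivAt (fun t => ((xstar t, t) :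
        EuclideanSpace ℝ (Fin n) × EuclideanSpace ℝ (Fin m)))
        (D.prod (ContinuousLinearMap.id ℝ (EuclideanSpace ℝ (Fin m)))) θ :=
      hxd.prodMk (hasFDerivAt_id θ)
    have h2 : HasFDerivAt ((fun p : EuclideanSpace ℝ (Fin n) × EuclideanSpace ℝ (Fin m) =>
          g p.1 p.2) ∘ (fun t => (xstar t, t)))
        (G'.comp (D.prod (ContinuousLinearMap.id ℝ (EuclideanSpace ℝ (Fin m))))) θ :=
      HasFDerivAt.comp θ (hgd (xstar θ, θ)).hasFDerivAt h1
    have hFd : HasFDerivAt F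
        (G'.comp (D.prod (ContinuousLinearMap.id ℝ (EuclideanSpace ℝ (Fin m))))) θ :=
      h2.congr_of_eventuallyEq (Filter.Eventually.of_forall fun t => hF t)
    refine ⟨_, hFd, ?_⟩
    intro j
    have hgθ : fderiv ℝ (fun t => g (xstar θ) t) θ = G'.comp
        (ContinuousLinearMap.inr ℝ (EuclideanSpace ℝ (Fin n)) (EuclideanSpace ℝ (Fin m))) :=
      ((hgd (xstar θ, θ)).hasFDerivAt.comp θ (hasFDerivAt_prodMk_right (xstar θ) θ)).fderiv
    have hgx : fderiv ℝ (fun x => g x θ) (xstar θ) = G'.comp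
        (ContinuousLinearMap.inl ℝ (EuclideanSpace ℝ (Fin n)) (EuclideanSpace ℝ (Fin m))) :=
      by have h := ((hgd (xstar θ, θ)).hasFDerivAt.comp (xstar θ) (hasFDerivAt_prodMk_left (𝕜 := ℝ) (xstar θ) θ)).fderiv; exact h
    have hsplit : ((D (EuclideanSpace.single j 1), EuclideanSpace.single j 1) :
        EuclideanSpace ℝ (Fin n) × EuclideanSpace ℝ (Fin m))
        = (D (EuclideanSpace.single j 1), (0 : EuclideanSpace ℝ (Fin m)))
          + ((0 : EuclideanSpace ℝ (Fin n)), EuclideanSpace.single j 1) := by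
      simp
    have happ : (G'.comp (D.prod (ContinuousLinearMap.id ℝ (EuclideanSpace ℝ (Fin m)))))
        (EuclideanSpace.single j 1)
        = G' (D (EuclideanSpace.single j 1), (0 : EuclideanSpace ℝ (Fin m)))
          + G' ((0 : EuclideanSpace ℝ (Fin n)), EuclideanSpace.single j 1) := by
      rw [← map_add, ← hsplit]
      rfl
    have hterm2 : G' ((0 : EuclideanSpace ℝ (Fin n)), EuclideanSpace.single j 1)
        = gradθg θ j := by
      rw [hgradθg θ j, hgθ]
      rfl
    have hterm1 : G' (D (EuclideanSpace.single j 1), (0 : EuclideanSpace ℝ (Fin m)))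
        = ∑ i, D (EuclideanSpace.single j 1) i * gradxg θ i := by
      have hl : G' (D (EuclideanSpace.single j 1), (0 : EuclideanSpace ℝ (Fin m)))
          = (G'.comp (ContinuousLinearMap.inl ℝ (EuclideanSpace ℝ (Fin n))
            (EuclideanSpace ℝ (Fin m)))) (D (EuclideanSpace.single j 1)) := rfl
      rw [hl, aux_clm_sum]
      congr 1
      funext i
      congr 1
      rw [hgradxg θ i, hgx]
    have hM : Hxx θ = fun i k => fderiv ℝ (fun x => fderiv ℝ (fun x' => f x' θ) x
        (EuclideanSpace.single k 1)) (xstar θ) (EuclideanSpace.single i 1) := by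
      funext i k
      exact hHxx θ i k
    have hdet' : (Hxx θ).det ≠ 0 := by rw [hM]; exact hdet
    set u : Fin n → ℝ := fun i => D (EuclideanSpace.single j 1) i with hudef
    have hrel' : ∀ k, Matrix.vecMul u (Hxx θ) k = - Hxθ θ k j := by
      intro k
      have e1 : Matrix.vecMul u (Hxx θ) k = ∑ i, u i * Hxx θ i k := by
        simp [Matrix.vecMul, dotProduct]
      rw [e1, hM, hHxθ θ k j]
      exact hrel j k
    have hIs : IsUnit (Hxx θ).det := isUnit_iff_ne_zero.mpr hdet'
    set w : Fin n → ℝ := Matrix.mulVec (Hxx θ)⁻¹ (gradxg θ) with hwdef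
    have hMw : Matrix.mulVec (Hxx θ) w = gradxg θ := by
      rw [hwdef, Matrix.mulVec_mulVec, Matrix.mul_nonsing_inv _ hIs, Matrix.one_mulVec]
    have hsum2 : (∑ i, D (EuclideanSpace.single j 1) i * gradxg θ i)
        = - Matrix.mulVec (Matrix.transpose (Hxθ θ)) w j := by
      have e1 : (∑ i, D (EuclideanSpace.single j 1) i * gradxg θ i)
          = dotProduct u (gradxg θ) := by
        simp [dotProduct, hudef]
      rw [e1, ← hMw, Matrix.dotProduct_mulVec]
      have e2 : Matrix.vecMul u (Hxx θ) = fun k => - Hxθ θ k j := funext hrel'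
      rw [e2]
      simp [dotProduct, Matrix.mulVec, Matrix.transpose_apply, neg_mul]
    rw [happ, hterm1, hterm2, hsum2, hwdef]
    ring
  constructor
  · intro θ
    obtain ⟨L, hL, _⟩ := main θ
    exact hL.differentiableAt
  · intro θ j
    obtain ⟨L, hL, hLj⟩ := main θ
    rw [hL.fderiv]
    exact hLj j
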